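/- arXiv:2605.24644 — 2 statements merged into one kernel-verified Lean document; each statement's English description precedes it below -/
import Mathlib

section
/- Let μ, ν be compactly supported probability measures on ℝ^d, φ convex and differentiable with L-Lipschitz gradient T = ∇φ, T_#μ = ν, and π* = (Id, T)_#μ optimal for the quadratic cost c(x,y) = ½‖x - y‖². Then for every coupling π of (μ, ν): ∫ ‖y - T(x)‖² dπ(x,y) ≤ 2L (∫ c dπ - ∫ c dπ*). -/
open MeasureTheory
open scoped NNReal

open InnerProductSpace
open scoped RealInnerProductSpace

section aux
variable {F : Type*} [NormedAddCommGroup F] [InnerProductSpace ℝ F] [CompleteSpace F]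

lemma line_hasDerivAt (φ : F → ℝ) (T : F → F) (hgrad : ∀ x, HasGradientAt φ (T x) x)
    (w v : F) (t : ℝ) :
    HasDerivAt (fun s : ℝ => φ (w + s • v)) ⟪T (w + t • v), v⟫ t := by
  have hline : HasDerivAt (fun s : ℝ => w + s • v) v t := by
    simpa using ((hasDerivAt_id t).smul_const v).const_add w
  have hφ := (hgrad (w + t • v)).hasFDerivAt
  have := hφ.comp_hasDerivAt t hline
  simpa [InnerProductSpace.toDual_apply_apply, Function.comp_def] using this

lemma subgrad_ineq (φ : F → ℝ) (hconv : ConvexOn ℝ Set.univ φ) (T : F → F)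
    (hgrad : ∀ x, HasGradientAt φ (T x) x) (w x : F) :
    φ w + ⟪T w, x - w⟫ ≤ φ x := by
  set g : ℝ → ℝ := fun s => φ (w + s • (x - w)) with hg
  have hd : HasDerivAt g ⟪T w, x - w⟫ 0 := by
    simpa using line_hasDerivAt φ T hgrad w (x - w) 0
  have htend : Filter.Tendsto (slope g 0) (nhdsWithin 0 (Set.Ioi 0)) (nhds ⟪T w, x - w⟫) :=
    (hasDerivAt_iff_tendsto_slope.1 hd).mono_left
      (nhdsWithin_mono 0 (fun t ht => ne_of_gt ht))
  have hub : ∀ᶠ t in nhdsWithin 0 (Set.Ioi 0), slope g 0 t ≤ φ x - φ w := by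
    filter_upwards [Ioc_mem_nhdsGT_of_mem (Set.left_mem_Ico.2 one_pos)] with t ht
    have ht0 : 0 < t := ht.1
    have hconvt : g t ≤ (1 - t) * φ w + t * φ x := by
      have := hconv.2 (Set.mem_univ w) (Set.mem_univ x)
        (by linarith [ht.2] : (0:ℝ) ≤ 1 - t) ht0.le (by ring)
      have hpt : w + t • (x - w) = (1 - t) • w + t • x := by
        rw [smul_sub, sub_smul, one_smul]; abel
      simpa [hg, hpt, smul_eq_mul] using this
    have hg0 : g 0 = φ w := by simp [hg]
    rw [slope_def_field, sub_zero, div_le_iff₀ ht0, hg0]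
    nlinarith
  have := le_of_tendsto htend hub
  linarith

lemma descent_ineq (φ : F → ℝ) (T : F → F) (hgrad : ∀ x, HasGradientAt φ (T x) x)
    (L : ℝ) (hL : 0 < L) (hlip : LipschitzWith (Real.toNNReal L) T) (a b : F) :
    φ b ≤ φ a + ⟪T a, b - a⟫ + L / 2 * ‖b - a‖ ^ 2 := by
  set v := b - a with hv
  set G : ℝ → ℝ := fun t => L / 2 * ‖v‖ ^ 2 * t ^ 2 + φ a + t * ⟪T a, v⟫ - φ (a + t • v) with hG
  have hGd : ∀ t : ℝ, HasDerivAt G (L * ‖v‖ ^ 2 * t + ⟪T a, v⟫ - ⟪T (a + t • v), v⟫) t := by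
    intro t
    have h1 : HasDerivAt (fun t : ℝ => L / 2 * ‖v‖ ^ 2 * t ^ 2 + φ a + t * ⟪T a, v⟫)
        (L * ‖v‖ ^ 2 * t + ⟪T a, v⟫) t := by
      have h := (((hasDerivAt_pow 2 t).const_mul (L / 2 * ‖v‖ ^ 2)).add_const (φ a)).add
          ((hasDerivAt_id' (x := t)).mul_const ⟪T a, v⟫)
      refine h.congr_deriv ?_
      simp only [Nat.cast_ofNat, show (2:ℕ) - 1 = 1 from rfl, pow_one]
      ring
    exact h1.sub (line_hasDerivAt φ T hgrad a v t)
  have hmono : MonotoneOn G (Set.Icc 0 1) := by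
    apply monotoneOn_of_deriv_nonneg (convex_Icc 0 1)
    · exact (fun t _ => ((hGd t).continuousAt.continuousWithinAt))
    · exact fun t _ => ((hGd t).differentiableAt).differentiableWithinAt
    · intro t ht
      rw [interior_Icc] at ht
      rw [(hGd t).deriv]
      have hlipb : ‖T (a + t • v) - T a‖ ≤ L * (t * ‖v‖) := by
        have := hlip.dist_le_mul (a + t • v) a
        simp only [dist_eq_norm, add_sub_cancel_left] at this
        calc ‖T (a + t • v) - T a‖ ≤ Real.toNNReal L * ‖t • v‖ := this
          _ = L * (t * ‖v‖) := by
              rw [Real.coe_toNNReal L hL.le, norm_smul, Real.norm_eq_abs,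
                abs_of_pos ht.1]
      have hinner : ⟪T (a + t • v) - T a, v⟫ ≤ L * ‖v‖ ^ 2 * t := by
        calc ⟪T (a + t • v) - T a, v⟫ ≤ ‖T (a + t • v) - T a‖ * ‖v‖ := real_inner_le_norm _ _
          _ ≤ L * (t * ‖v‖) * ‖v‖ := by
              apply mul_le_mul_of_nonneg_right hlipb (norm_nonneg _)
          _ = L * ‖v‖ ^ 2 * t := by ring
      rw [inner_sub_left] at hinner
      linarith
  have h01 := hmono (Set.left_mem_Icc.2 zero_le_one) (Set.right_mem_Icc.2 zero_le_one) zero_le_one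
  have hG0 : G 0 = φ a - φ a := by simp [hG]
  have hab : a + v = b := by rw [hv]; abel
  have hG1 : G 1 = L / 2 * ‖v‖ ^ 2 + φ a + ⟪T a, v⟫ - φ b := by simp [hG, hab]
  rw [hG0, hG1] at h01
  linarith

lemma cocoercive (φ : F → ℝ) (hconv : ConvexOn ℝ Set.univ φ) (T : F → F)
    (hgrad : ∀ x, HasGradientAt φ (T x) x)
    (L : ℝ) (hL : 0 < L) (hlip : LipschitzWith (Real.toNNReal L) T) (w x : F) :
    ‖T x - T w‖ ^ 2 ≤ 2 * L * (φ x - φ w - ⟪T w, x - w⟫) := by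
  set u := x - L⁻¹ • (T x - T w) with hu
  have h1 := descent_ineq φ T hgrad L hL hlip x u
  have h2 := subgrad_ineq φ hconv T hgrad w u
  have hux : u - x = -(L⁻¹ • (T x - T w)) := by rw [hu]; abel
  have hiu : ⟪T x, u - x⟫ = -(L⁻¹ * ⟪T x, T x - T w⟫) := by
    rw [hux, inner_neg_right, real_inner_smul_right]
  have hnu : ‖u - x‖ ^ 2 = L⁻¹ ^ 2 * ‖T x - T w‖ ^ 2 := by
    rw [hux, norm_neg, norm_smul, mul_pow, Real.norm_eq_abs, sq_abs]
  have huw : u - w = (x - w) - L⁻¹ • (T x - T w) := by rw [hu]; abel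
  have hiw : ⟪T w, u - w⟫ = ⟪T w, x - w⟫ - L⁻¹ * ⟪T w, T x - T w⟫ := by
    rw [huw, inner_sub_right, real_inner_smul_right]
  rw [hiu, hnu] at h1
  rw [hiw] at h2
  have hsq : ⟪T x, T x - T w⟫ - ⟪T w, T x - T w⟫ = ‖T x - T w‖ ^ 2 := by
    rw [← inner_sub_left, real_inner_self_eq_norm_sq]
  have key : L⁻¹ * ‖T x - T w‖ ^ 2 ≤ (φ x - φ w - ⟪T w, x - w⟫) + L⁻¹ / 2 * ‖T x - T w‖ ^ 2 := by
    have e1 : L / 2 * (L⁻¹ ^ 2 * ‖T x - T w‖ ^ 2) = L⁻¹ / 2 * ‖T x - T w‖ ^ 2 := by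
      field_simp
    have e2 : L⁻¹ * ⟪T x, T x - T w⟫ - L⁻¹ * ⟪T w, T x - T w⟫ = L⁻¹ * ‖T x - T w‖ ^ 2 := by
      rw [← mul_sub, hsq]
    linarith
  have h3 : L⁻¹ / 2 * ‖T x - T w‖ ^ 2 ≤ φ x - φ w - ⟪T w, x - w⟫ := by linarith
  have h4 := mul_le_mul_of_nonneg_left h3 (by positivity : (0:ℝ) ≤ 2 * L)
  calc ‖T x - T w‖ ^ 2 = 2 * L * (L⁻¹ / 2 * ‖T x - T w‖ ^ 2) := by
        field_simp
    _ ≤ _ := h4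

end aux

lemma integrable_of_null_compl {X : Type*} [MeasurableSpace X] [TopologicalSpace X]
    [OpensMeasurableSpace X] (ρ : MeasureTheory.Measure X) [MeasureTheory.IsFiniteMeasure ρ]
    {K : Set X} (hK : IsCompact K) (hρ : ρ Kᶜ = 0) {f : X → ℝ} (hf : Continuous f) :
    MeasureTheory.Integrable f ρ := by
  obtain ⟨C, hC⟩ := hK.exists_bound_of_continuousOn hf.continuousOn
  refine MeasureTheory.Integrable.mono' (MeasureTheory.integrable_const C)
    hf.aestronglyMeasurable ?_
  have hae : ∀ᵐ x ∂ρ, x ∈ K := by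
    rw [MeasureTheory.ae_iff]
    exact hρ
  filter_upwards [hae] with x hx using hC x hx

/-- For compactly supported `μ, ν`, convex `φ` with `L`-Lipschitz gradient `T = ∇φ`,
`T_#μ = ν`, and `π* = (Id,T)_#μ` optimal for the quadratic cost, every coupling `π`
of `(μ,ν)` satisfies `∫ ‖y - T x‖² dπ ≤ 2L (∫ c dπ - ∫ c dπ*)`. -/
theorem stmt_9 (d : ℕ) (L : ℝ) (hL : 0 < L)
    (μ ν : Measure (EuclideanSpace ℝ (Fin d)))
    [IsProbabilityMeasure μ] [IsProbabilityMeasure ν]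
    (Kμ Kν : Set (EuclideanSpace ℝ (Fin d)))
    (hKμ : IsCompact Kμ) (hKν : IsCompact Kν) (hμK : μ Kμᶜ = 0) (hνK : ν Kνᶜ = 0)
    (φ : EuclideanSpace ℝ (Fin d) → ℝ)
    (hconv : ConvexOn ℝ Set.univ φ)
    (T : EuclideanSpace ℝ (Fin d) → EuclideanSpace ℝ (Fin d))
    (hgrad : ∀ x, HasGradientAt φ (T x) x)
    (hlip : LipschitzWith (Real.toNNReal L) T)
    (hpush : Measure.map T μ = ν)
    (c : EuclideanSpace ℝ (Fin d) × EuclideanSpace ℝ (Fin d) → ℝ)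
    (hc : ∀ p, c p = (1 / 2) * ‖p.1 - p.2‖ ^ 2)
    (πstar : Measure (EuclideanSpace ℝ (Fin d) × EuclideanSpace ℝ (Fin d)))
    (hπstar : πstar = Measure.map (fun x => (x, T x)) μ)
    (hopt : ∀ π' : Measure (EuclideanSpace ℝ (Fin d) × EuclideanSpace ℝ (Fin d)),
      IsProbabilityMeasure π' → Measure.map Prod.fst π' = μ → Measure.map Prod.snd π' = ν →
      ∫ p, c p ∂πstar ≤ ∫ p, c p ∂π')
    (π : Measure (EuclideanSpace ℝ (Fin d) × EuclideanSpace ℝ (Fin d)))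
    [IsProbabilityMeasure π]
    (hπ1 : Measure.map Prod.fst π = μ) (hπ2 : Measure.map Prod.snd π = ν) :
    ∫ p, ‖p.2 - T p.1‖ ^ 2 ∂π ≤ 2 * L * (∫ p, c p ∂π - ∫ p, c p ∂πstar) := by
  have hTcont : Continuous T := hlip.continuous
  have hφcont : Continuous φ := by
    rw [continuous_iff_continuousAt]
    exact fun x => ((hgrad x).hasFDerivAt.differentiableAt).continuousAt
  have hmapm : Measurable (fun x : EuclideanSpace ℝ (Fin d) => (x, T x)) :=
    measurable_id.prodMk hlip.continuous.measurable
  haveI hπsprob : IsProbabilityMeasure πstar := by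
    rw [hπstar]; exact Measure.isProbabilityMeasure_map hmapm.aemeasurable
  have hKne : Kμ.Nonempty := by
    rcases Set.eq_empty_or_nonempty Kμ with h | h
    · exfalso
      rw [h, Set.compl_empty] at hμK
      simpa [measure_univ] using hμK
    · exact h
  obtain ⟨x₀, hx₀K, hx₀'⟩ := hKμ.exists_isMaxOn hKne continuous_norm.continuousOn
  have hx₀ : ∀ x ∈ Kμ, ‖x‖ ≤ ‖x₀‖ := fun x hx => hx₀' hx
  set R := ‖x₀‖ with hRdef
  have hR0 : 0 ≤ R := norm_nonneg _
  set ψ : EuclideanSpace ℝ (Fin d) → ℝ :=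
    fun y => sSup ((fun x => ⟪x, y⟫ - φ x) '' Kμ) with hψdef
  have hcont' : ∀ y, Continuous (fun x : EuclideanSpace ℝ (Fin d) => ⟪x, y⟫ - φ x) := fun y =>
    (continuous_id.inner continuous_const).sub hφcont
  have hbdd : ∀ y, BddAbove ((fun x => ⟪x, y⟫ - φ x) '' Kμ) := fun y =>
    (hKμ.image (hcont' y)).bddAbove
  have hne' : ∀ y, ((fun x => ⟪x, y⟫ - φ x) '' Kμ).Nonempty := fun y => hKne.image _
  have hψ_ge : ∀ x ∈ Kμ, ∀ y, ⟪x, y⟫ - φ x ≤ ψ y := fun x hx y =>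
    le_csSup (hbdd y) (Set.mem_image_of_mem _ hx)
  have hψT_le : ∀ w, ψ (T w) ≤ ⟪w, T w⟫ - φ w := by
    intro w
    apply csSup_le (hne' _)
    rintro z ⟨x, hxK, rfl⟩
    have hs := subgrad_ineq φ hconv T hgrad w x
    have hinn : ⟪T w, x - w⟫ = ⟪x, T w⟫ - ⟪w, T w⟫ := by
      rw [inner_sub_right, real_inner_comm (T w) x, real_inner_comm (T w) w]
    simp only []
    linarith
  have hψeq : ∀ w ∈ Kμ, ψ (T w) = ⟪w, T w⟫ - φ w := fun w hw =>
    le_antisymm (hψT_le w) (hψ_ge w hw (T w))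
  have hψkey : ∀ y₁ y₂, ψ y₁ - ψ y₂ ≤ R * dist y₁ y₂ := by
    intro y₁ y₂
    have h : ψ y₁ ≤ ψ y₂ + R * dist y₁ y₂ := by
      apply csSup_le (hne' _)
      rintro z ⟨x, hxK, rfl⟩
      have h1 : ⟪x, y₂⟫ - φ x ≤ ψ y₂ := hψ_ge x hxK y₂
      have h2 : ⟪x, y₁ - y₂⟫ ≤ R * dist y₁ y₂ := by
        calc ⟪x, y₁ - y₂⟫ ≤ ‖x‖ * ‖y₁ - y₂‖ := real_inner_le_norm _ _
          _ ≤ R * ‖y₁ - y₂‖ := mul_le_mul_of_nonneg_right (hx₀ x hxK) (norm_nonneg _)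
          _ = R * dist y₁ y₂ := by rw [dist_eq_norm]
      have h3 : ⟪x, y₁ - y₂⟫ = ⟪x, y₁⟫ - ⟪x, y₂⟫ := inner_sub_right _ _ _
      simp only []
      linarith
    linarith
  have hψlip : LipschitzWith (Real.toNNReal R) ψ := by
    apply LipschitzWith.of_dist_le_mul
    intro y₁ y₂
    rw [Real.dist_eq, Real.coe_toNNReal R hR0]
    refine abs_sub_le_iff.2 ⟨hψkey y₁ y₂, ?_⟩
    rw [dist_comm]
    exact hψkey y₂ y₁
  have hψcont : Continuous ψ := hψlip.continuous
  have hKμm : MeasurableSet Kμ := hKμ.isClosed.measurableSet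
  have hTK : IsCompact (T '' Kμ) := hKμ.image hTcont
  have hTKm : MeasurableSet (T '' Kμ) := hTK.isClosed.measurableSet
  have hμae : ∀ᵐ x ∂μ, x ∈ Kμ := by rw [ae_iff]; exact hμK
  have hπ1' : ∀ᵐ p ∂π, p.1 ∈ Kμ := by
    rw [ae_iff]
    have he : {p : EuclideanSpace ℝ (Fin d) × EuclideanSpace ℝ (Fin d) | ¬ p.1 ∈ Kμ}
        = Prod.fst ⁻¹' Kμᶜ := rfl
    rw [he, ← Measure.map_apply measurable_fst hKμm.compl, hπ1]
    exact hμK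
  have hνTK : ν (T '' Kμ)ᶜ = 0 := by
    rw [← hpush, Measure.map_apply hTcont.measurable hTKm.compl]
    apply measure_mono_null _ hμK
    intro x hx
    simp only [Set.mem_preimage, Set.mem_compl_iff] at hx ⊢
    exact fun hxK => hx (Set.mem_image_of_mem T hxK)
  have hπ2' : ∀ᵐ p ∂π, p.2 ∈ T '' Kμ := by
    rw [ae_iff]
    have he : {p : EuclideanSpace ℝ (Fin d) × EuclideanSpace ℝ (Fin d) | ¬ p.2 ∈ T '' Kμ}
        = Prod.snd ⁻¹' (T '' Kμ)ᶜ := rfl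
    rw [he, ← Measure.map_apply measurable_snd hTKm.compl, hπ2]
    exact hνTK
  have hπKae : ∀ᵐ p ∂π, p ∈ Kμ ×ˢ (T '' Kμ) := by
    filter_upwards [hπ1', hπ2'] with p h1 h2 using ⟨h1, h2⟩
  have hπKc : π (Kμ ×ˢ (T '' Kμ))ᶜ = 0 := ae_iff.1 hπKae
  have hπsKc : πstar (Kμ ×ˢ (T '' Kμ))ᶜ = 0 := by
    rw [hπstar, Measure.map_apply hmapm ((hKμ.prod hTK).isClosed.measurableSet).compl]
    apply measure_mono_null _ hμK
    intro x hx
    simp only [Set.mem_preimage, Set.mem_compl_iff, Set.mem_prod] at hx ⊢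
    intro hxK
    exact hx ⟨hxK, Set.mem_image_of_mem T hxK⟩
  have hKK : IsCompact (Kμ ×ˢ (T '' Kμ)) := hKμ.prod hTK
  -- continuity of integrands
  have hinnerc : Continuous
      (fun p : EuclideanSpace ℝ (Fin d) × EuclideanSpace ℝ (Fin d) => ⟪p.1, p.2⟫) :=
    continuous_fst.inner continuous_snd
  set g : EuclideanSpace ℝ (Fin d) × EuclideanSpace ℝ (Fin d) → ℝ :=
    fun p => φ p.1 + ψ p.2 - ⟪p.1, p.2⟫ with hgdef
  have hgcont : Continuous g :=
    ((hφcont.comp continuous_fst).add (hψcont.comp continuous_snd)).sub hinnerc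
  have hceq : c = fun p => (1 / 2) * ‖p.1 - p.2‖ ^ 2 := funext hc
  have hccont : Continuous c := by
    rw [hceq]
    exact continuous_const.mul ((continuous_fst.sub continuous_snd).norm.pow 2)
  have hfcont : Continuous
      (fun p : EuclideanSpace ℝ (Fin d) × EuclideanSpace ℝ (Fin d) => ‖p.2 - T p.1‖ ^ 2) :=
    ((continuous_snd.sub (hTcont.comp continuous_fst)).norm.pow 2)
  set u₁ : EuclideanSpace ℝ (Fin d) → ℝ := fun x => (1 / 2) * ‖x‖ ^ 2 - φ x with hu₁def
  set u₂ : EuclideanSpace ℝ (Fin d) → ℝ := fun y => (1 / 2) * ‖y‖ ^ 2 - ψ y with hu₂def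
  have hu₁cont : Continuous u₁ := (continuous_const.mul (continuous_norm.pow 2)).sub hφcont
  have hu₂cont : Continuous u₂ := (continuous_const.mul (continuous_norm.pow 2)).sub hψcont
  have hC1 : Continuous (fun p : EuclideanSpace ℝ (Fin d) × EuclideanSpace ℝ (Fin d) => u₁ p.1) :=
    hu₁cont.comp continuous_fst
  have hC2 : Continuous (fun p : EuclideanSpace ℝ (Fin d) × EuclideanSpace ℝ (Fin d) => u₂ p.2) :=
    hu₂cont.comp continuous_snd
  -- integrability
  have hIgπ : Integrable g π := integrable_of_null_compl π hKK hπKc hgcont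
  have hIgs : Integrable g πstar := integrable_of_null_compl πstar hKK hπsKc hgcont
  have hIcπ : Integrable c π := integrable_of_null_compl π hKK hπKc hccont
  have hIcs : Integrable c πstar := integrable_of_null_compl πstar hKK hπsKc hccont
  have hIfπ : Integrable (fun p => ‖p.2 - T p.1‖ ^ 2) π :=
    integrable_of_null_compl π hKK hπKc hfcont
  have hIu₁π : Integrable (fun p : EuclideanSpace ℝ (Fin d) × EuclideanSpace ℝ (Fin d) => u₁ p.1) π :=
    integrable_of_null_compl π hKK hπKc hC1
  have hIu₂π : Integrable (fun p : EuclideanSpace ℝ (Fin d) × EuclideanSpace ℝ (Fin d) => u₂ p.2) π :=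
    integrable_of_null_compl π hKK hπKc hC2
  have hIu₁s : Integrable (fun p : EuclideanSpace ℝ (Fin d) × EuclideanSpace ℝ (Fin d) => u₁ p.1) πstar :=
    integrable_of_null_compl πstar hKK hπsKc hC1
  have hIu₂s : Integrable (fun p : EuclideanSpace ℝ (Fin d) × EuclideanSpace ℝ (Fin d) => u₂ p.2) πstar :=
    integrable_of_null_compl πstar hKK hπsKc hC2
  -- pointwise decomposition of c
  have hdecomp : ∀ p : EuclideanSpace ℝ (Fin d) × EuclideanSpace ℝ (Fin d),
      c p = g p + u₁ p.1 + u₂ p.2 := by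
    intro p
    have hn := @norm_sub_sq_real (EuclideanSpace ℝ (Fin d)) _ _ p.1 p.2
    rw [hc]
    simp only [hgdef, hu₁def, hu₂def]
    linarith
  -- marginal integral identities
  have hm1π : ∫ p, u₁ p.1 ∂π = ∫ x, u₁ x ∂μ := by
    rw [← hπ1, integral_map measurable_fst.aemeasurable hu₁cont.aestronglyMeasurable]
  have hm2π : ∫ p, u₂ p.2 ∂π = ∫ y, u₂ y ∂ν := by
    rw [← hπ2, integral_map measurable_snd.aemeasurable hu₂cont.aestronglyMeasurable]
  have hm1s : ∫ p, u₁ p.1 ∂πstar = ∫ x, u₁ x ∂μ := by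
    rw [hπstar, integral_map hmapm.aemeasurable hC1.aestronglyMeasurable]
  have hm2s : ∫ p, u₂ p.2 ∂πstar = ∫ y, u₂ y ∂ν := by
    rw [hπstar, integral_map hmapm.aemeasurable hC2.aestronglyMeasurable,
      ← hpush, integral_map hTcont.measurable.aemeasurable hu₂cont.aestronglyMeasurable]
  have hciπ : ∫ p, c p ∂π = ∫ p, g p ∂π + (∫ x, u₁ x ∂μ + ∫ y, u₂ y ∂ν) := by
    calc ∫ p, c p ∂π = ∫ p, (g p + u₁ p.1 + u₂ p.2) ∂π := by
          apply integral_congr_ae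
          filter_upwards with p using hdecomp p
      _ = ∫ p, g p ∂π + ∫ p, u₁ p.1 ∂π + ∫ p, u₂ p.2 ∂π := by
          have e1 : ∫ p, (g p + u₁ p.1 + u₂ p.2) ∂π
              = ∫ p, (g p + u₁ p.1) ∂π + ∫ p, u₂ p.2 ∂π :=
            integral_add (hIgπ.add hIu₁π) hIu₂π
          have e2 : ∫ p, (g p + u₁ p.1) ∂π = ∫ p, g p ∂π + ∫ p, u₁ p.1 ∂π :=
            integral_add hIgπ hIu₁π
          rw [e1, e2]
      _ = _ := by rw [hm1π, hm2π]; ring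
  have hcis : ∫ p, c p ∂πstar = ∫ p, g p ∂πstar + (∫ x, u₁ x ∂μ + ∫ y, u₂ y ∂ν) := by
    calc ∫ p, c p ∂πstar = ∫ p, (g p + u₁ p.1 + u₂ p.2) ∂πstar := by
          apply integral_congr_ae
          filter_upwards with p using hdecomp p
      _ = ∫ p, g p ∂πstar + ∫ p, u₁ p.1 ∂πstar + ∫ p, u₂ p.2 ∂πstar := by
          have e1 : ∫ p, (g p + u₁ p.1 + u₂ p.2) ∂πstar
              = ∫ p, (g p + u₁ p.1) ∂πstar + ∫ p, u₂ p.2 ∂πstar :=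
            integral_add (hIgs.add hIu₁s) hIu₂s
          have e2 : ∫ p, (g p + u₁ p.1) ∂πstar = ∫ p, g p ∂πstar + ∫ p, u₁ p.1 ∂πstar :=
            integral_add hIgs hIu₁s
          rw [e1, e2]
      _ = _ := by rw [hm1s, hm2s]; ring
  have hgs0 : ∫ p, g p ∂πstar = 0 := by
    rw [hπstar, integral_map hmapm.aemeasurable hgcont.aestronglyMeasurable]
    have : ∀ᵐ x ∂μ, g (x, T x) = 0 := by
      filter_upwards [hμae] with x hx
      simp only [hgdef]
      rw [hψeq x hx]
      ring
    rw [integral_congr_ae this, integral_zero]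
  have hdiff : ∫ p, c p ∂π - ∫ p, c p ∂πstar = ∫ p, g p ∂π := by
    rw [hciπ, hcis, hgs0]; ring
  -- pointwise bound
  have hptw : ∀ᵐ p ∂π, ‖p.2 - T p.1‖ ^ 2 ≤ 2 * L * g p := by
    filter_upwards [hπ2'] with p hp
    obtain ⟨w, hwK, hwp⟩ := hp
    have hco := cocoercive φ hconv T hgrad L hL hlip w p.1
    have hψg := mul_le_mul_of_nonneg_left (hψ_ge w hwK (T w)) (by positivity : (0:ℝ) ≤ 2 * L)
    have hinn : ⟪T w, p.1 - w⟫ = ⟪p.1, T w⟫ - ⟪w, T w⟫ := by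
      rw [inner_sub_right, real_inner_comm (T w) p.1, real_inner_comm (T w) w]
    rw [hinn] at hco
    have hnr : ‖p.2 - T p.1‖ ^ 2 = ‖T p.1 - T w‖ ^ 2 := by
      rw [← hwp, norm_sub_rev]
    simp only [hgdef]
    rw [hnr, ← hwp]
    nlinarith [hco, hψg]
  have hmain : ∫ p, ‖p.2 - T p.1‖ ^ 2 ∂π ≤ ∫ p, 2 * L * g p ∂π :=
    integral_mono_ae hIfπ (hIgπ.const_mul _) hptw
  rw [integral_const_mul] at hmain
  rw [hdiff]
  linarith
end

section
/- Let μ be a probability measure on ℝ^d with density f_μ(x) = Z₀^{-1} exp(-½(x - m₀)ᵀΣ₀^{-1}(x - m₀)) · 1_{Ω₀}(x) and ν a probability measure with density f_ν(y) = Z₁^{-1} exp(-½(y - m₁)ᵀΣ₁^{-1}(y - m₁)) · 1_{Ω₁}(y), where Ω₀, Ω₁ ⊂ ℝ^d are bounded open sets with nonempty interior and Σ₀, Σ₁ are symmetric positive definite. Suppose T(x) = Ax + a with A symmetric positive definite pushes μ forward to ν. Then Ω₁ = AΩ₀ + a up to Lebesgue-null sets, m₁ = Am₀ + a, and Σ₁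 = AΣ₀A. -/
open MeasureTheory
open scoped RealInnerProductSpace

open Matrix
open scoped ENNReal

section Aux
variable {d : ℕ}

private lemma map_withDensity_equiv (e : EuclideanSpace ℝ (Fin d) ≃ᵐ EuclideanSpace ℝ (Fin d))
    (f : EuclideanSpace ℝ (Fin d) → ℝ≥0∞) (hf : Measurable f) :
    (volume.withDensity f).map e = (volume.map e).withDensity (f ∘ e.symm) := by
  ext s hs
  rw [Measure.map_apply e.measurable hs, withDensity_apply _ (e.measurable hs),
    withDensity_apply _ hs, setLIntegral_map hs (hf.comp e.symm.measurable) e.measurable]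
  simp [Function.comp]

private lemma smul_withDensity (c : ℝ≥0∞) (hc : c ≠ ⊤) (h : EuclideanSpace ℝ (Fin d) → ℝ≥0∞) :
    (c • volume).withDensity h = volume.withDensity (fun y => c * h y) := by
  ext s hs
  rw [withDensity_apply _ hs, withDensity_apply _ hs, Measure.restrict_smul,
    lintegral_smul_measure, smul_eq_mul, ← lintegral_const_mul' _ _ hc]

private lemma inner_tel {d : ℕ} (P : Matrix (Fin d) (Fin d) ℝ) (x y : EuclideanSpace ℝ (Fin d)) :
    ⟪x, Matrix.toEuclideanLin P y⟫ = (WithLp.equiv 2 _ x) ⬝ᵥ (P *ᵥ (WithLp.equiv 2 _ y)) := by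
  simp [PiLp.inner_apply, RCLike.inner_apply, dotProduct, conj_trivial]
  exact Finset.sum_congr rfl fun i _ => mul_comm _ _

private lemma posdef_inner {d : ℕ} {C : Matrix (Fin d) (Fin d) ℝ} (hC : C.PosDef)
    {x : EuclideanSpace ℝ (Fin d)} (hx : x ≠ 0) :
    0 < ⟪x, Matrix.toEuclideanLin C x⟫ := by
  rw [inner_tel]
  have hx' : (WithLp.equiv 2 (Fin d → ℝ)) x ≠ 0 := by
    simpa using hx
  simpa using hC.dotProduct_mulVec_pos hx'

private lemma quad_aux {α β γ κ δ : ℝ} (hδ : 0 < δ)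
    (h : ∀ t : ℝ, |t| < δ → α*t^2 + β*t + γ = κ) : α = 0 ∧ β = 0 := by
  have h0 := h 0 (by simpa using hδ)
  have h1 := h (δ/2) (by rw [abs_of_pos (by linarith)]; linarith)
  have h2 := h (-(δ/2)) (by rw [abs_neg, abs_of_pos (by linarith)]; linarith)
  have h2' : α*(δ/2)^2 - β*(δ/2) + γ = κ := by linear_combination h2
  have hα : α * (δ/2)^2 = 0 := by linarith
  have hβ : β * (δ/2) = 0 := by linarith
  have hd : (δ/2) ≠ 0 := by positivity
  have hd2 : (δ/2)^2 ≠ 0 := pow_ne_zero 2 hd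
  exact ⟨(mul_eq_zero.mp hα).resolve_right hd2, (mul_eq_zero.mp hβ).resolve_right hd⟩

private lemma quad_eq {d : ℕ} {C₀ C₁ : Matrix (Fin d) (Fin d) ℝ}
    (h₀ : C₀.IsHermitian) (h₁p : C₁.PosDef)
    {b₀ b₁ : EuclideanSpace ℝ (Fin d)} {κ : ℝ} {U : Set (EuclideanSpace ℝ (Fin d))}
    (hU : IsOpen U) (hne : U.Nonempty)
    (h : ∀ y ∈ U, ⟪y-b₁, Matrix.toEuclideanLin C₁ (y-b₁)⟫
        = ⟪y-b₀, Matrix.toEuclideanLin C₀ (y-b₀)⟫ + κ) :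
    C₁ = C₀ ∧ b₁ = b₀ := by
  set L₁ := Matrix.toEuclideanLin C₁ with hL₁
  set L₀ := Matrix.toEuclideanLin C₀ with hL₀
  have sym₁ : L₁.IsSymmetric := (Matrix.isHermitian_iff_isSymmetric).mp h₁p.1
  have sym₀ : L₀.IsSymmetric := (Matrix.isHermitian_iff_isSymmetric).mp h₀
  obtain ⟨y₀, hy₀⟩ := hne
  obtain ⟨ε, hε, hball⟩ := Metric.isOpen_iff.mp hU y₀ hy₀
  set w₁ := y₀ - b₁ with hw₁
  set w₀ := y₀ - b₀ with hw₀
  have key : ∀ v : EuclideanSpace ℝ (Fin d),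
      ⟪v, L₁ v⟫ - ⟪v, L₀ v⟫ = 0 ∧ ⟪v, L₁ w₁⟫ - ⟪v, L₀ w₀⟫ = 0 := by
    intro v
    have hδ : 0 < ε / (‖v‖ + 1) := div_pos hε (by positivity)
    suffices hs : (⟪v, L₁ v⟫ - ⟪v, L₀ v⟫ = 0) ∧ (2*(⟪v, L₁ w₁⟫ - ⟪v, L₀ w₀⟫) = 0) by
      exact ⟨hs.1, by linarith [hs.2]⟩
    refine quad_aux (κ := κ) hδ (α := ⟪v, L₁ v⟫ - ⟪v, L₀ v⟫) (β := 2*(⟪v, L₁ w₁⟫ - ⟪v, L₀ w₀⟫))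
      (γ := ⟪w₁, L₁ w₁⟫ - ⟪w₀, L₀ w₀⟫) ?_
    intro t ht
    have hmem : y₀ + t • v ∈ U := by
      apply hball
      rw [Metric.mem_ball, dist_eq_norm, add_sub_cancel_left, norm_smul]
      calc ‖t‖ * ‖v‖ ≤ |t| * (‖v‖ + 1) := by
            rw [Real.norm_eq_abs]
            exact mul_le_mul_of_nonneg_left (by linarith) (abs_nonneg t)
        _ < ε := by
            rw [← lt_div_iff₀ (by positivity)]
            exact ht
    have hy := h _ hmem
    have e1 : y₀ + t • v - b₁ = w₁ + t • v := by rw [hw₁]; abel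
    have e0 : y₀ + t • v - b₀ = w₀ + t • v := by rw [hw₀]; abel
    rw [e1, e0] at hy
    have exp1 : ∀ (L : EuclideanSpace ℝ (Fin d) →ₗ[ℝ] EuclideanSpace ℝ (Fin d))
        (hs : L.IsSymmetric) (w : EuclideanSpace ℝ (Fin d)),
        ⟪w + t • v, L (w + t • v)⟫ = ⟪w, L w⟫ + 2*t*⟪v, L w⟫ + t^2*⟪v, L v⟫ := by
      intro L hs w
      rw [map_add, LinearMap.map_smul, inner_add_left, inner_add_right, inner_add_right,
        inner_smul_left, inner_smul_right, inner_smul_left, inner_smul_right]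
      have hsw : ⟪w, L v⟫ = ⟪v, L w⟫ := by
        rw [← hs w v, real_inner_comm]
      simp only [RCLike.conj_to_real, hsw]
      ring
    rw [exp1 L₁ sym₁ w₁, exp1 L₀ sym₀ w₀] at hy
    ring_nf
    ring_nf at hy
    linarith
  have hB : ∀ v, L₁ v = L₀ v := by
    intro v
    have huv : ∀ u, ⟪u, L₁ v - L₀ v⟫ = 0 := by
      intro u
      have h1 := (key (u + v)).1
      have h2 := (key u).1
      have h3 := (key v).1
      have e1 : ⟪u + v, L₁ (u+v)⟫ = ⟪u, L₁ u⟫ + ⟪u, L₁ v⟫ + ⟪v, L₁ u⟫ + ⟪v, L₁ v⟫ := by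
        rw [map_add, inner_add_left, inner_add_right, inner_add_right]; ring
      have e0 : ⟪u + v, L₀ (u+v)⟫ = ⟪u, L₀ u⟫ + ⟪u, L₀ v⟫ + ⟪v, L₀ u⟫ + ⟪v, L₀ v⟫ := by
        rw [map_add, inner_add_left, inner_add_right, inner_add_right]; ring
      have s1 : ⟪v, L₁ u⟫ = ⟪u, L₁ v⟫ := by rw [← sym₁ v u, real_inner_comm]
      have s0 : ⟪v, L₀ u⟫ = ⟪u, L₀ v⟫ := by rw [← sym₀ v u, real_inner_comm]
      rw [inner_sub_right]
      rw [e1, e0, s1, s0] at h1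
      linarith
    have := huv (L₁ v - L₀ v)
    rw [real_inner_self_eq_norm_sq] at this
    have : L₁ v - L₀ v = 0 := by
      rw [← norm_eq_zero]
      nlinarith [norm_nonneg (L₁ v - L₀ v)]
    rw [sub_eq_zero] at this
    exact this
  have hCC : C₁ = C₀ := by
    apply Matrix.toEuclideanLin.injective
    exact LinearMap.ext hB
  refine ⟨hCC, ?_⟩
  have hw : L₁ w₁ = L₁ w₀ := by
    rw [show L₁ w₀ = L₀ w₀ from hB w₀]
    apply ext_inner_left ℝ
    intro u
    have := (key u).2
    linarith
  have hw10 : w₁ = w₀ := by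
    by_contra hne'
    have hsub : w₁ - w₀ ≠ 0 := sub_ne_zero.mpr hne'
    have hz : L₁ (w₁ - w₀) = 0 := by rw [map_sub, hw, sub_self]
    have hpos := posdef_inner h₁p hsub
    rw [hL₁] at hz
    rw [hz, inner_zero_right] at hpos
    exact lt_irrefl 0 hpos
  have : y₀ - b₁ = y₀ - b₀ := hw10
  exact sub_right_injective this

end Aux

/-- Necessity: if an affine map `T(x) = Ax + a` with `A ≻ 0` pushes a truncated
Gaussian `μ` (parameters `m₀, S₀`, domain `Ω₀`) forward to a truncated Gaussian `ν`
(parameters `m₁, S₁`, domain `Ω₁`), then `Ω₁ = AΩ₀ + a` up to Lebesgue-null sets,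
`m₁ = Am₀ + a`, and `S₁ = AS₀A`. -/
theorem stmt_15 (d : ℕ)
    (Ω₀ Ω₁ : Set (EuclideanSpace ℝ (Fin d)))
    (hΩ₀o : IsOpen Ω₀) (hΩ₁o : IsOpen Ω₁)
    (hΩ₀b : Bornology.IsBounded Ω₀) (hΩ₁b : Bornology.IsBounded Ω₁)
    (hΩ₀ne : Ω₀.Nonempty) (hΩ₁ne : Ω₁.Nonempty)
    (m₀ m₁ : EuclideanSpace ℝ (Fin d))
    (S₀ S₁ : Matrix (Fin d) (Fin d) ℝ) (hS₀ : S₀.PosDef) (hS₁ : S₁.PosDef)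
    (Z₀ Z₁ : ℝ) (hZ₀ : 0 < Z₀) (hZ₁ : 0 < Z₁)
    (μ ν : Measure (EuclideanSpace ℝ (Fin d)))
    [IsProbabilityMeasure μ] [IsProbabilityMeasure ν]
    (hμ : μ = volume.withDensity (fun x =>
      Set.indicator Ω₀ (fun x => ENNReal.ofReal (Z₀⁻¹ *
        Real.exp (-(1 / 2) * ⟪x - m₀, Matrix.toEuclideanLin S₀⁻¹ (x - m₀)⟫))) x))
    (hν : ν = volume.withDensity (fun y =>
      Set.indicator Ω₁ (fun y => ENNReal.ofReal (Z₁⁻¹ *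
        Real.exp (-(1 / 2) * ⟪y - m₁, Matrix.toEuclideanLin S₁⁻¹ (y - m₁)⟫))) y))
    (A : Matrix (Fin d) (Fin d) ℝ) (hA : A.PosDef) (a : EuclideanSpace ℝ (Fin d))
    (T : EuclideanSpace ℝ (Fin d) → EuclideanSpace ℝ (Fin d))
    (hT : ∀ x, T x = Matrix.toEuclideanLin A x + a)
    (hpush : Measure.map T μ = ν) :
    volume (symmDiff Ω₁ (T '' Ω₀)) = 0 ∧
    m₁ = Matrix.toEuclideanLin A m₀ + a ∧
    S₁ = A * S₀ * A := by
  classical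
  have hAdet : A.det ≠ 0 := ne_of_gt hA.det_pos
  have hAdetU : IsUnit A.det := isUnit_iff_ne_zero.mpr hAdet
  have hInv : A⁻¹ * A = 1 := Matrix.nonsing_inv_mul A hAdetU
  have hInv' : A * A⁻¹ = 1 := Matrix.mul_nonsing_inv A hAdetU
  set L := Matrix.toEuclideanLin A with hL
  set M := Matrix.toEuclideanLin A⁻¹ with hM
  have hcomp : ∀ (P Q : Matrix (Fin d) (Fin d) ℝ) x,
      Matrix.toEuclideanLin (P * Q) x = Matrix.toEuclideanLin P (Matrix.toEuclideanLin Q x) := by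
    intro P Q x
    simp [Matrix.toEuclideanLin_eq_toLin, Matrix.toLin_mul _ (PiLp.basisFun 2 ℝ (Fin d))]
  have hone : ∀ x : EuclideanSpace ℝ (Fin d),
      Matrix.toEuclideanLin (1 : Matrix (Fin d) (Fin d) ℝ) x = x := by
    intro x; simp [Matrix.toEuclideanLin_eq_toLin]
  have hML : ∀ x, M (L x) = x := by
    intro x; rw [hM, hL, ← hcomp, hInv, hone]
  have hLM : ∀ x, L (M x) = x := by
    intro x; rw [hM, hL, ← hcomp, hInv', hone]
  set Sinv : EuclideanSpace ℝ (Fin d) → EuclideanSpace ℝ (Fin d) := fun y => M (y - a)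
    with hSinv
  have hTS : ∀ x, Sinv (T x) = x := by
    intro x; rw [hSinv]; simp only [hT x, add_sub_cancel_right]; exact hML x
  have hST : ∀ y, T (Sinv y) = y := by
    intro y; rw [hT, hSinv]; simp only [hLM]; abel
  have hTeq : T = fun x => L x + a := funext hT
  have hTcont : Continuous T := by
    rw [hTeq]; exact (L.continuous_of_finiteDimensional).add continuous_const
  have hScont : Continuous Sinv :=
    M.continuous_of_finiteDimensional.comp (continuous_id.sub continuous_const)
  set e : EuclideanSpace ℝ (Fin d) ≃ᵐ EuclideanSpace ℝ (Fin d) :=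
    (Homeomorph.mk ⟨T, Sinv, hTS, hST⟩ hTcont hScont).toMeasurableEquiv with he
  have himg : T '' Ω₀ = Sinv ⁻¹' Ω₀ := by
    ext y
    constructor
    · rintro ⟨x, hx, rfl⟩
      simpa [Set.mem_preimage, hTS x] using hx
    · intro hy
      exact ⟨Sinv y, hy, hST y⟩
  set F : EuclideanSpace ℝ (Fin d) → ℝ := fun x => Z₀⁻¹ *
      Real.exp (-(1 / 2) * ⟪x - m₀, Matrix.toEuclideanLin S₀⁻¹ (x - m₀)⟫) with hF
  set G : EuclideanSpace ℝ (Fin d) → ℝ := fun y => Z₁⁻¹ *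
      Real.exp (-(1 / 2) * ⟪y - m₁, Matrix.toEuclideanLin S₁⁻¹ (y - m₁)⟫) with hG
  have hFpos : ∀ x, 0 < F x := fun x => mul_pos (inv_pos.mpr hZ₀) (Real.exp_pos _)
  have hGpos : ∀ y, 0 < G y := fun y => mul_pos (inv_pos.mpr hZ₁) (Real.exp_pos _)
  have hquadcont : ∀ (S : Matrix (Fin d) (Fin d) ℝ) (m : EuclideanSpace ℝ (Fin d)),
      Continuous fun y : EuclideanSpace ℝ (Fin d) =>
        ⟪y - m, Matrix.toEuclideanLin S (y - m)⟫ := by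
    intro S m
    exact (continuous_id.sub continuous_const).inner
      ((S.toEuclideanLin.continuous_of_finiteDimensional).comp
        (continuous_id.sub continuous_const))
  have hFcont : Continuous F :=
    continuous_const.mul ((continuous_const.mul (hquadcont S₀⁻¹ m₀)).rexp)
  have hGcont : Continuous G :=
    continuous_const.mul ((continuous_const.mul (hquadcont S₁⁻¹ m₁)).rexp)
  set f : EuclideanSpace ℝ (Fin d) → ℝ≥0∞ :=
    fun x => Ω₀.indicator (fun x => ENNReal.ofReal (F x)) x with hf
  set g : EuclideanSpace ℝ (Fin d) → ℝ≥0∞ :=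
    fun y => Ω₁.indicator (fun y => ENNReal.ofReal (G y)) y with hg
  have hμ' : μ = volume.withDensity f := hμ
  have hν' : ν = volume.withDensity g := hν
  have hfmeas : Measurable f :=
    ((ENNReal.continuous_ofReal.comp hFcont).measurable).indicator hΩ₀o.measurableSet
  have hgmeas : Measurable g :=
    ((ENNReal.continuous_ofReal.comp hGcont).measurable).indicator hΩ₁o.measurableSet
  set c : ℝ≥0∞ := ENNReal.ofReal |A.det⁻¹| with hc
  have habs : 0 < |A.det⁻¹| := abs_pos.mpr (inv_ne_zero hAdet)
  have hc0 : c ≠ 0 := by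
    rw [hc]; exact (ENNReal.ofReal_pos.mpr habs).ne'
  have hctop : c ≠ ⊤ := ENNReal.ofReal_ne_top
  have hdetL : LinearMap.det L = A.det := by
    rw [hL, Matrix.toEuclideanLin_eq_toLin]; exact LinearMap.det_toLin _ _
  have hmapvol : Measure.map T volume = c • volume := by
    have h1 : Measure.map L volume = c • volume := by
      rw [Measure.map_linearMap_addHaar_eq_smul_addHaar volume (by rw [hdetL]; exact hAdet),
        hdetL]
    have hTeq2 : T = (fun y => y + a) ∘ fun x => L x := funext fun x => by simp [hT x]
    rw [hTeq2, ← Measure.map_map (measurable_add_const a)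
      L.continuous_of_finiteDimensional.measurable, h1, Measure.map_smul,
      Measure.IsAddRightInvariant.map_add_right_eq_self a]
  have hmapμ : Measure.map T μ = volume.withDensity (fun y => c * f (Sinv y)) := by
    rw [hμ']
    have h2 : Measure.map T (volume.withDensity f)
        = (Measure.map T volume).withDensity (f ∘ Sinv) := by
      have := map_withDensity_equiv e f hfmeas
      exact this
    rw [h2, hmapvol, smul_withDensity c hctop]
    rfl
  have hwd : volume.withDensity (fun y => c * f (Sinv y)) = volume.withDensity g := by
    rw [← hmapμ, hpush, hν']
  have hmeas1 : Measurable fun y => c * f (Sinv y) :=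
    (hfmeas.comp hScont.measurable).const_mul c
  have hfin : ∫⁻ y, c * f (Sinv y) ≠ ⊤ := by
    have hrw : ∫⁻ y, c * f (Sinv y)
        = (volume.withDensity (fun y => c * f (Sinv y))) Set.univ := by
      rw [withDensity_apply _ MeasurableSet.univ, setLIntegral_univ]
    rw [hrw, ← hmapμ, hpush]
    simp
  have hae : (fun y => c * f (Sinv y)) =ᵐ[volume] g :=
    (withDensity_eq_iff hmeas1.aemeasurable hgmeas.aemeasurable hfin).mp hwd
  have haemeas : volume {y | ¬ c * f (Sinv y) = g y} = 0 := hae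
  -- Part 1
  have hsub : symmDiff Ω₁ (T '' Ω₀) ⊆ {y | ¬ c * f (Sinv y) = g y} := by
    rw [himg]
    intro y hy
    rcases Set.mem_symmDiff.mp hy with ⟨h1, h2⟩ | ⟨h1, h2⟩
    · have hfz : f (Sinv y) = 0 := Set.indicator_of_notMem (fun hx => h2 (Set.mem_preimage.mpr hx)) _
      have hgz : g y = ENNReal.ofReal (G y) := Set.indicator_of_mem h1 _
      simp only [Set.mem_setOf_eq]
      intro hcon
      rw [hfz, hgz, mul_zero] at hcon
      exact (ENNReal.ofReal_pos.mpr (hGpos y)).ne' hcon.symm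
    · have hfz : f (Sinv y) = ENNReal.ofReal (F (Sinv y)) := Set.indicator_of_mem (Set.mem_preimage.mp h1) _
      have hgz : g y = 0 := Set.indicator_of_notMem h2 _
      simp only [Set.mem_setOf_eq]
      intro hcon
      rw [hfz, hgz] at hcon
      exact mul_ne_zero hc0 (ENNReal.ofReal_pos.mpr (hFpos _)).ne' hcon
  have part1 : volume (symmDiff Ω₁ (T '' Ω₀)) = 0 := measure_mono_null hsub haemeas
  refine ⟨part1, ?_⟩
  -- the open set U
  set U : Set (EuclideanSpace ℝ (Fin d)) := Ω₁ ∩ Sinv ⁻¹' Ω₀ with hU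
  have hUopen : IsOpen U := hΩ₁o.inter (hΩ₀o.preimage hScont)
  have hUne : U.Nonempty := by
    by_contra h'
    rw [Set.not_nonempty_iff_eq_empty] at h'
    have hpos := hΩ₁o.measure_pos volume hΩ₁ne
    have hcover : Ω₁ ⊆ symmDiff Ω₁ (T '' Ω₀) := by
      rw [himg]
      intro y hy
      rw [Set.mem_symmDiff]
      left
      exact ⟨hy, fun hmem => Set.eq_empty_iff_forall_notMem.mp h' y ⟨hy, hmem⟩⟩
    exact absurd (measure_mono_null hcover part1) hpos.ne'
  -- everywhere equality on U
  set H : EuclideanSpace ℝ (Fin d) → ℝ := fun y => |A.det⁻¹| * F (Sinv y) with hH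
  have hHcont : Continuous H := continuous_const.mul (hFcont.comp hScont)
  have hHG : ∀ y ∈ U, H y = G y := by
    set B := {y | H y ≠ G y} ∩ U with hB
    have hBopen : IsOpen B := by
      have : IsOpen {y | H y ≠ G y} := isOpen_ne_fun hHcont hGcont
      exact this.inter hUopen
    have hBnull : volume B = 0 := by
      refine measure_mono_null ?_ haemeas
      rintro y ⟨hyne, hy1, hy0⟩
      simp only [Set.mem_setOf_eq]
      intro hcon
      apply hyne
      have h1' : f (Sinv y) = ENNReal.ofReal (F (Sinv y)) := Set.indicator_of_mem (Set.mem_preimage.mp hy0) _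
      have h2' : g y = ENNReal.ofReal (G y) := Set.indicator_of_mem hy1 _
      rw [h1', h2', hc, ← ENNReal.ofReal_mul (le_of_lt habs)] at hcon
      exact (ENNReal.ofReal_eq_ofReal_iff
        (mul_nonneg habs.le (hFpos _).le) (hGpos y).le).mp hcon
    have hBempty : B = ∅ := by
      by_contra hB'
      rw [← Ne, ← Set.nonempty_iff_ne_empty] at hB'
      exact absurd hBnull (hBopen.measure_pos volume hB').ne'
    intro y hy
    by_contra hne'
    have hmem : y ∈ B := ⟨hne', hy⟩
    rw [hBempty] at hmem
    exact hmem
  -- logarithms: quadratic forms agree up to a constant on U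
  set b : EuclideanSpace ℝ (Fin d) := L m₀ + a with hb
  set C₀ : Matrix (Fin d) (Fin d) ℝ := A⁻¹ * S₀⁻¹ * A⁻¹ with hC₀
  set κ : ℝ := -2 * (Real.log |A.det⁻¹| + Real.log Z₀⁻¹ - Real.log Z₁⁻¹) with hκ
  have hrew : ∀ y, Sinv y - m₀ = M (y - b) := by
    intro y
    have hm0 : m₀ = M (L m₀) := (hML m₀).symm
    calc Sinv y - m₀ = M (y - a) - M (L m₀) := by rw [← hm0]
      _ = M (y - a - L m₀) := (M.map_sub _ _).symm
      _ = M (y - b) := by rw [hb]; congr 1; abel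
  have hAinvherm : (A⁻¹).IsHermitian := hA.1.inv
  have hsymM : M.IsSymmetric := by
    rw [hM]; exact (Matrix.isHermitian_iff_isSymmetric).mp hAinvherm
  have hinner : ∀ u, ⟪M u, Matrix.toEuclideanLin S₀⁻¹ (M u)⟫
      = ⟪u, Matrix.toEuclideanLin C₀ u⟫ := by
    intro u
    rw [hC₀, hcomp (A⁻¹ * S₀⁻¹) A⁻¹, hcomp A⁻¹ S₀⁻¹]
    rw [← hM, ← hsymM u]
  have hquad : ∀ y ∈ U, ⟪y - m₁, Matrix.toEuclideanLin S₁⁻¹ (y - m₁)⟫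
      = ⟪y - b, Matrix.toEuclideanLin C₀ (y - b)⟫ + κ := by
    intro y hy
    have heq := hHG y hy
    rw [hH, hF, hG] at heq
    set P : ℝ := ⟪Sinv y - m₀, Matrix.toEuclideanLin S₀⁻¹ (Sinv y - m₀)⟫ with hP
    set Q : ℝ := ⟪y - m₁, Matrix.toEuclideanLin S₁⁻¹ (y - m₁)⟫ with hQ
    have hlog := congrArg Real.log heq
    rw [Real.log_mul habs.ne' (mul_pos (inv_pos.mpr hZ₀) (Real.exp_pos _)).ne',
      Real.log_mul (inv_pos.mpr hZ₀).ne' (Real.exp_pos _).ne',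
      Real.log_mul (inv_pos.mpr hZ₁).ne' (Real.exp_pos _).ne',
      Real.log_exp, Real.log_exp] at hlog
    have hPrw : ⟪y - b, Matrix.toEuclideanLin C₀ (y - b)⟫ = P := by
      rw [hP, hrew y, hinner]
    rw [hPrw, hκ]
    linarith
  have hC₀herm : C₀.IsHermitian := by
    have hS₀inv : (S₀⁻¹).IsHermitian := hS₀.1.inv
    show C₀ᴴ = C₀
    rw [hC₀, Matrix.conjTranspose_mul, Matrix.conjTranspose_mul,
      hAinvherm.eq, hS₀inv.eq, mul_assoc]
  obtain ⟨hC, hbb⟩ := quad_eq hC₀herm hS₁.inv hUopen hUne hquad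
  refine ⟨hbb, ?_⟩
  -- invert the matrix identity
  have hS₁det : S₁.det ≠ 0 := ne_of_gt hS₁.det_pos
  have hS₀det : S₀.det ≠ 0 := ne_of_gt hS₀.det_pos
  have hinv2 : (S₁⁻¹)⁻¹ = (C₀)⁻¹ := by rw [hC]
  rw [Matrix.nonsing_inv_nonsing_inv S₁ (isUnit_iff_ne_zero.mpr hS₁det), hC₀, Matrix.mul_inv_rev,
    Matrix.mul_inv_rev, Matrix.nonsing_inv_nonsing_inv A (isUnit_iff_ne_zero.mpr hAdet),
    Matrix.nonsing_inv_nonsing_inv S₀ (isUnit_iff_ne_zero.mpr hS₀det)] at hinv2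
  rw [hinv2, mul_assoc]
end
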